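/- Let U be a finite set with n = |U| ≥ 1, let 𝒮 be a finite collection of subsets of U whose union is U, and let c : 𝒮 → ℝ≥0 be a cost function. Consider the greedy algorithm that, while uncovered elements remain, selects a set S ∈ 𝒮 minimizing c(S)/|S ∩ (uncovered elements)| among sets covering at least one new element, and adds it to the solution. Then the greedy algorithm terminates with a cover V of U, and for every subcollection OPT ⊆ 𝒮 whose union is U, c(V) := Σ_{S ∈ V} c(S) satisfies c(V) ≤ (Σ_{k=1}^{n} 1/k) · c(OPT), where c(OPT) = Σ_{S ∈ OPT} c(S). -/

import Mathlib

open scoped NNReal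

/-- `GreedySteps 𝒮 c R V` means that `V` is a possible output of the greedy
set cover algorithm run with collection `𝒮` and cost function `c`, starting
from the set `R` of currently uncovered elements: while uncovered elements
remain, select a set `S ∈ 𝒮` covering at least one new element and minimizing
the price `c(S)/|S ∩ R|` among all such sets, add it to the solution, and
remove its elements from the uncovered set. -/
inductive GreedySteps {α : Type*} [DecidableEq α]
    (𝒮 : Finset (Finset α)) (c : Finset α → ℝ≥0) :
    Finset α → Finset (Finset α) → Prop
  | nil : GreedySteps 𝒮 c ∅ ∅
  | step {R S : Finset α} {V : Finset (Finset α)}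
      (hS : S ∈ 𝒮) (hnew : (S ∩ R).Nonempty)
      (hmin : ∀ S' ∈ 𝒮, (S' ∩ R).Nonempty →
        (c S : ℝ) / ((S ∩ R).card : ℝ) ≤ (c S' : ℝ) / ((S' ∩ R).card : ℝ))
      (hrest : GreedySteps 𝒮 c (R \ S) V) :
      GreedySteps 𝒮 c R (insert S V)

section Aux
variable {α : Type*} [DecidableEq α] {𝒮 : Finset (Finset α)} {c : Finset α → ℝ≥0}

open Finset

lemma greedy_mem_inter {R : Finset α} {V : Finset (Finset α)}
    (h : GreedySteps 𝒮 c R V) : ∀ T ∈ V, (T ∩ R).Nonempty := by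
  induction h with
  | nil => simp
  | @step R S V hS hnew hmin hrest ih =>
      intro T hT
      rcases Finset.mem_insert.1 hT with rfl | hT
      · exact hnew
      · obtain ⟨x, hx⟩ := ih T hT
        simp only [mem_inter, mem_sdiff] at hx
        exact ⟨x, mem_inter.2 ⟨hx.1, hx.2.1⟩⟩

lemma greedy_cover {R : Finset α} {V : Finset (Finset α)}
    (h : GreedySteps 𝒮 c R V) : R ⊆ V.biUnion id := by
  induction h with
  | nil => simp
  | @step R S V hS hnew hmin hrest ih =>
      intro x hx
      by_cases hxS : x ∈ S
      · exact mem_biUnion.2 ⟨S, mem_insert_self _ _, hxS⟩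
      · obtain ⟨T, hT, hxT⟩ := mem_biUnion.1 (ih (mem_sdiff.2 ⟨hx, hxS⟩))
        exact mem_biUnion.2 ⟨T, mem_insert_of_mem hT, hxT⟩

lemma greedy_cost {R : Finset α} {V : Finset (Finset α)}
    (h : GreedySteps 𝒮 c R V) :
    ∀ OPT ⊆ 𝒮, R ⊆ OPT.biUnion id →
      (∑ S ∈ V, (c S : ℝ)) ≤
        (∑ k ∈ Finset.Ioc 0 R.card, (1 : ℝ) / (k : ℝ)) * ∑ S ∈ OPT, (c S : ℝ) := by
  induction h with
  | nil =>
      intro OPT _ _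
      rw [Finset.sum_empty]
      positivity
  | @step R S V hS hnew hmin hrest ih =>
      intro OPT hOPT hRO
      have hSV : S ∉ V := by
        intro hSV
        obtain ⟨x, hx⟩ := greedy_mem_inter hrest S hSV
        simp [mem_inter, mem_sdiff] at hx
      rw [Finset.sum_insert hSV]
      set C : ℝ := ∑ S ∈ OPT, (c S : ℝ) with hC
      have hC0 : 0 ≤ C := by positivity
      set r : ℕ := R.card
      set s : ℕ := (S ∩ R).card with hs
      set m : ℕ := (R \ S).card with hm
      have hs0 : 0 < s := Finset.card_pos.2 hnew
      have hsr : s ≤ r := Finset.card_le_card (Finset.inter_subset_right)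
      have hr0 : 0 < r := lt_of_lt_of_le hs0 hsr
      have hmrs : m + s = r := by
        have := Finset.card_inter_add_card_sdiff R S
        rw [Finset.inter_comm] at this
        omega
      -- ∑ over OPT of |S' ∩ R| ≥ r
      have hcardsum : (r : ℝ) ≤ ∑ S' ∈ OPT, ((S' ∩ R).card : ℝ) := by
        have hsub : R ⊆ OPT.biUnion (fun S' => S' ∩ R) := by
          intro x hx
          obtain ⟨T, hT, hxT⟩ := Finset.mem_biUnion.1 (hRO hx)
          exact Finset.mem_biUnion.2 ⟨T, hT, Finset.mem_inter.2 ⟨hxT, hx⟩⟩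
        have := le_trans (Finset.card_le_card hsub) (Finset.card_biUnion_le)
        exact_mod_cast this
      set p : ℝ := (c S : ℝ) / (s : ℝ) with hp
      have hp0 : 0 ≤ p := by positivity
      -- C ≥ p * r
      have hCpr : p * r ≤ C := by
        have hterm : ∀ S' ∈ OPT, p * ((S' ∩ R).card : ℝ) ≤ (c S' : ℝ) := by
          intro S' hS'
          rcases (S' ∩ R).eq_empty_or_nonempty with he | hne
          · simp [he]
          · have hc0 : (0 : ℝ) < ((S' ∩ R).card : ℝ) := by
              exact_mod_cast Finset.card_pos.2 hne
            have := hmin S' (hOPT hS') hne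
            rw [div_le_div_iff₀ (by exact_mod_cast hs0) hc0] at this
            have hs0' : (0 : ℝ) < (s : ℝ) := by exact_mod_cast hs0
            rw [hp, div_mul_eq_mul_div, div_le_iff₀ hs0']
            exact this
        calc p * (r : ℝ) ≤ p * ∑ S' ∈ OPT, ((S' ∩ R).card : ℝ) := by
              exact mul_le_mul_of_nonneg_left hcardsum hp0
          _ = ∑ S' ∈ OPT, p * ((S' ∩ R).card : ℝ) := Finset.mul_sum _ _ _
          _ ≤ C := Finset.sum_le_sum hterm
      -- c S ≤ (∑ k ∈ Ioc m r, 1/k) * C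
      have hkey : (c S : ℝ) ≤ (∑ k ∈ Finset.Ioc m r, (1 : ℝ) / (k : ℝ)) * C := by
        have hcs : (c S : ℝ) = p * s := by
          rw [hp]; field_simp
        have hsumge : (s : ℝ) / (r : ℝ) ≤ ∑ k ∈ Finset.Ioc m r, (1 : ℝ) / (k : ℝ) := by
          have : ∀ k ∈ Finset.Ioc m r, (1 : ℝ) / (r : ℝ) ≤ (1 : ℝ) / (k : ℝ) := by
            intro k hk
            rw [Finset.mem_Ioc] at hk
            apply one_div_le_one_div_of_le
            · exact_mod_cast Nat.lt_of_le_of_lt (Nat.zero_le m) hk.1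
            · exact_mod_cast hk.2
          have h1 := Finset.sum_le_sum this
          rw [Finset.sum_const, Nat.card_Ioc, nsmul_eq_mul] at h1
          have hrm : r - m = s := by omega
          rw [hrm] at h1
          calc (s : ℝ) / (r : ℝ) = (s : ℝ) * (1 / (r : ℝ)) := by ring
            _ ≤ _ := h1
        have hpr : p ≤ C / r := by
          rw [le_div_iff₀ (by exact_mod_cast hr0)]
          exact hCpr
        calc (c S : ℝ) = p * s := hcs
          _ ≤ (C / r) * s := by
              exact mul_le_mul_of_nonneg_right hpr (Nat.cast_nonneg _)
          _ = ((s : ℝ) / (r : ℝ)) * C := by ring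
          _ ≤ (∑ k ∈ Finset.Ioc m r, (1 : ℝ) / (k : ℝ)) * C :=
              mul_le_mul_of_nonneg_right hsumge hC0
      have hRS : R \ S ⊆ OPT.biUnion id :=
        (Finset.sdiff_subset).trans hRO
      have hIH := ih OPT hOPT hRS
      have hsplit : (∑ k ∈ Finset.Ioc 0 m, (1 : ℝ) / (k : ℝ)) +
          ∑ k ∈ Finset.Ioc m r, (1 : ℝ) / (k : ℝ) =
          ∑ k ∈ Finset.Ioc 0 r, (1 : ℝ) / (k : ℝ) :=
        Finset.sum_Ioc_consecutive _ (Nat.zero_le m) (by omega)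
      calc (c S : ℝ) + ∑ T ∈ V, (c T : ℝ)
          ≤ (∑ k ∈ Finset.Ioc m r, (1 : ℝ) / (k : ℝ)) * C +
            (∑ k ∈ Finset.Ioc 0 m, (1 : ℝ) / (k : ℝ)) * C := add_le_add hkey hIH
        _ = (∑ k ∈ Finset.Ioc 0 r, (1 : ℝ) / (k : ℝ)) * C := by
            rw [← hsplit]; ring

lemma greedy_exists (𝒮 : Finset (Finset α)) (c : Finset α → ℝ≥0) :
    ∀ R : Finset α, R ⊆ 𝒮.biUnion id → ∃ V, GreedySteps 𝒮 c R V := by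
  intro R
  induction R using Finset.strongInductionOn with
  | _ R ih =>
    intro hR
    rcases R.eq_empty_or_nonempty with rfl | ⟨x, hx⟩
    · exact ⟨∅, .nil⟩
    · have hx' := hR hx
      simp only [Finset.mem_biUnion, id] at hx'
      obtain ⟨S0, hS0, hxS0⟩ := hx'
      have hT : (𝒮.filter (fun S => (S ∩ R).Nonempty)).Nonempty :=
        ⟨S0, Finset.mem_filter.2 ⟨hS0, ⟨x, Finset.mem_inter.2 ⟨hxS0, hx⟩⟩⟩⟩
      obtain ⟨S, hSmem, hSmin⟩ :=
        Finset.exists_min_image _ (fun S => (c S : ℝ) / ((S ∩ R).card : ℝ)) hT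
      rw [Finset.mem_filter] at hSmem
      have hsub : R \ S ⊂ R := by
        obtain ⟨y, hy⟩ := hSmem.2
        rw [Finset.mem_inter] at hy
        refine (Finset.ssubset_iff_of_subset (Finset.sdiff_subset)).2 ?_
        exact ⟨y, hy.2, by simp [hy.1]⟩
      obtain ⟨V, hV⟩ := ih _ hsub ((Finset.sdiff_subset).trans hR)
      exact ⟨insert S V,
        .step hSmem.1 hSmem.2
          (fun S' hS' hne => hSmin S' (Finset.mem_filter.2 ⟨hS', hne⟩)) hV⟩

end Aux

/-- The greedy algorithm for minimum set cover terminates with a cover `V` of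
`U`, and the cost of any such greedy solution is at most the `n`-th harmonic
number times the cost of any set cover `OPT ⊆ 𝒮` of `U`. -/
theorem stmt_2 {α : Type*} [DecidableEq α]
    (U : Finset α) (n : ℕ) (hn : n = U.card) (hn1 : 1 ≤ n)
    (𝒮 : Finset (Finset α)) (hcover : 𝒮.biUnion id = U)
    (c : Finset α → ℝ≥0) :
    (∃ V, GreedySteps 𝒮 c U V) ∧
      ∀ V, GreedySteps 𝒮 c U V →
        U ⊆ V.biUnion id ∧
        ∀ OPT ⊆ 𝒮, OPT.biUnion id = U →
          (∑ S ∈ V, (c S : ℝ)) ≤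
            (∑ k ∈ Finset.Icc 1 n, (1 : ℝ) / (k : ℝ)) * ∑ S ∈ OPT, (c S : ℝ) := by

  constructor
  · exact greedy_exists 𝒮 c U (by rw [hcover])
  · intro V hV
    refine ⟨greedy_cover hV, fun OPT hOPT hOPTcov => ?_⟩
    have := greedy_cost hV OPT hOPT (by rw [hOPTcov])
    rw [← hn] at this
    rwa [show Finset.Ioc 0 n = Finset.Icc 1 n from (Finset.Icc_add_one_left_eq_Ioc 0 n).symm] at this
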